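/- arXiv:1112.5215 — 5 statements merged into one kernel-verified Lean document; each statement's English description precedes it below -/
import Mathlib

section
/- Let P be an orthogonal projector (P² = P = Pᵀ) and A a real matrix. Then for every nonnegative integer q, ‖P A‖ ≤ ‖P (A Aᵀ)^q A‖^{1/(2q+1)}, where ‖·‖ is the spectral norm. -/
open Matrix MeasureTheory ProbabilityTheory

noncomputable def specNorm {m n : Type*} [Fintype m] [Fintype n] [DecidableEq n]
    (A : Matrix m n ℝ) : ℝ :=
  ‖(Matrix.toEuclideanLin A).toContinuousLinearMap‖

noncomputable def frobNorm {m n : Type*} [Fintype m] [Fintype n] (A : Matrix m n ℝ) : ℝ :=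
  Real.sqrt (∑ i, ∑ j, (A i j) ^ 2)

/-- Moore–Penrose pseudoinverse of a full-row-rank matrix: `B† = Bᵀ (B Bᵀ)⁻¹`. -/
noncomputable def pinvFR {r k : Type*} [Fintype r] [Fintype k] [DecidableEq r]
    (B : Matrix r k ℝ) : Matrix k r ℝ :=
  Bᵀ * (B * Bᵀ)⁻¹

instance matMS (m n : ℕ) : MeasurableSpace (Matrix (Fin m) (Fin n) ℝ) :=
  (inferInstance : MeasurableSpace (Fin m → Fin n → ℝ))

/-- The law of an `m × n` random matrix with i.i.d. standard Gaussian entries. -/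
noncomputable def stdGaussian (m n : ℕ) : Measure (Matrix (Fin m) (Fin n) ℝ) :=
  (Measure.pi fun _ : Fin m => Measure.pi fun _ : Fin n => gaussianReal 0 1 :
    Measure (Fin m → Fin n → ℝ))

open scoped Matrix.Norms.L2Operator

lemma specNorm_eq_l2 {m n : Type*} [Fintype m] [Fintype n] [DecidableEq n]
    (A : Matrix m n ℝ) : specNorm A = ‖A‖ := rfl

/-- Abstract sequence lemma: a nonnegative log-convex sequence with `d 0 ≤ 1`
satisfies `d 1 ^ (k+1) ≤ d (k+1)`. -/
lemma seq_pow_le (d : ℕ → ℝ) (hdnn : ∀ j, 0 ≤ d j) (hd0 : d 0 ≤ 1)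
    (key : ∀ j, d (j + 1) * d (j + 1) ≤ d j * d (j + 2)) (k : ℕ) :
    d 1 ^ (k + 1) ≤ d (k + 1) := by
  rcases eq_or_lt_of_le (hdnn 1) with h1 | h1
  · rw [← h1, zero_pow (Nat.succ_ne_zero k)]
    exact hdnn _
  · have step : ∀ j : ℕ, 0 < d (j + 1) ∧ d 1 * d (j + 1) ≤ d (j + 2) := by
      intro j
      induction j with
      | zero =>
        refine ⟨h1, ?_⟩
        have hk0 := key 0
        nlinarith [hdnn 2, hdnn 0]
      | succ j ih =>
        obtain ⟨hpos, hle⟩ := ih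
        have hpos2 : 0 < d (j + 2) := lt_of_lt_of_le (by positivity) hle
        refine ⟨hpos2, ?_⟩
        have hk := key (j + 1)
        have h2 : d 1 * d (j + 2) * d (j + 2) ≤ d (j + 3) * d (j + 2) := by
          nlinarith [hdnn (j + 3)]
        exact le_of_mul_le_mul_right h2 hpos2
    induction k with
    | zero => simp
    | succ k ih =>
      calc d 1 ^ (k + 2) = d 1 * d 1 ^ (k + 1) := by ring
        _ ≤ d 1 * d (k + 1) := by nlinarith [hdnn (k + 1)]
        _ ≤ d (k + 2) := (step k).2

/-- Power scheme norm inequality:  for an orthogonal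
projector . -/
theorem specNorm_proj_le_pow {m n : ℕ} (P : Matrix (Fin m) (Fin m) ℝ)
    (A : Matrix (Fin m) (Fin n) ℝ) (hP : P * P = P) (hPt : Pᵀ = P) (q : ℕ) :
    specNorm (P * A) ≤ specNorm (P * (A * Aᵀ) ^ q * A) ^ ((1 : ℝ) / (2 * q + 1)) := by
  rw [specNorm_eq_l2, specNorm_eq_l2]
  have hct : ∀ {a b : Type} [Fintype a] [Fintype b] (M : Matrix a b ℝ), Mᴴ = Mᵀ :=
    fun M => conjTranspose_eq_transpose_of_trivial M
  set S : Matrix (Fin m) (Fin m) ℝ := A * Aᵀ with hSdef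
  have hS : S.PosSemidef := by
    have := posSemidef_self_mul_conjTranspose A
    rwa [hct] at this
  obtain ⟨R, hRt, hRR⟩ : ∃ R : Matrix (Fin m) (Fin m) ℝ, Rᴴ = R ∧ R * R = S :=
    open scoped MatrixOrder in
    ⟨CFC.sqrt S, (CFC.sqrt_nonneg S).posSemidef.1, CFC.sqrt_mul_sqrt_self S hS.nonneg⟩
  have hPc : Pᴴ = P := by rw [hct]; exact hPt
  have hRpt : ∀ j : ℕ, (R ^ j)ᴴ = R ^ j := by
    intro j; rw [conjTranspose_pow, hRt]
  have hR2 : ∀ j : ℕ, R ^ (2 * j) = S ^ j := by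
    intro j; rw [pow_mul, pow_two, hRR]
  set d : ℕ → ℝ := fun j => ‖R ^ j * P‖ with hd
  have hdnn : ∀ j, 0 ≤ d j := fun j => norm_nonneg _
  have hsq : ∀ j : ℕ, d j * d j = ‖P * R ^ (2 * j) * P‖ := by
    intro j
    have h := Matrix.l2_opNorm_conjTranspose_mul_self (R ^ j * P)
    rw [conjTranspose_mul, hPc, hRpt] at h
    have e : P * R ^ j * (R ^ j * P) = P * R ^ (2 * j) * P := by
      rw [← Matrix.mul_assoc, Matrix.mul_assoc P, ← pow_add, ← two_mul]
    rw [hd]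
    simp only
    rw [← h, e]
  have key : ∀ j : ℕ, d (j + 1) * d (j + 1) ≤ d j * d (j + 2) := by
    intro j
    rw [hsq]
    have e : P * R ^ (2 * (j + 1)) * P = (R ^ j * P)ᴴ * (R ^ (j + 2) * P) := by
      rw [conjTranspose_mul, hPc, hRpt, show 2 * (j + 1) = j + (j + 2) by ring, pow_add]
      simp only [Matrix.mul_assoc]
    rw [e]
    calc ‖(R ^ j * P)ᴴ * (R ^ (j + 2) * P)‖
        ≤ ‖(R ^ j * P)ᴴ‖ * ‖R ^ (j + 2) * P‖ := Matrix.l2_opNorm_mul _ _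
      _ = d j * d (j + 2) := by rw [Matrix.l2_opNorm_conjTranspose]
  have hPnorm : ‖P‖ ≤ 1 := by
    have h1 : ‖P‖ * ‖P‖ = ‖P‖ := by
      have := Matrix.l2_opNorm_conjTranspose_mul_self P
      rw [hPc, hP] at this
      linarith [this]
    nlinarith [norm_nonneg P]
  have hd0 : d 0 ≤ 1 := by
    rw [hd]; simpa using hPnorm
  have hPA : ‖P * A‖ = d 1 := by
    have e1 : ‖P * A‖ * ‖P * A‖ = ‖P * S * P‖ := by
      have h := Matrix.l2_opNorm_conjTranspose_mul_self ((P * A)ᴴ)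
      rw [conjTranspose_conjTranspose, Matrix.l2_opNorm_conjTranspose] at h
      rw [← h, conjTranspose_mul, hPc, hct, hSdef]
      simp only [Matrix.mul_assoc]
    have e2 : d 1 * d 1 = ‖P * S * P‖ := by
      rw [hsq 1, hR2 1, pow_one]
    have h3 : ‖P * A‖ * ‖P * A‖ = d 1 * d 1 := by rw [e1, e2]
    nlinarith [norm_nonneg (P * A), hdnn 1]
  have hPSA : ‖P * S ^ q * A‖ = d (2 * q + 1) := by
    have e1 : ‖P * S ^ q * A‖ * ‖P * S ^ q * A‖ = ‖P * S ^ (2 * q + 1) * P‖ := by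
      have h := Matrix.l2_opNorm_conjTranspose_mul_self ((P * S ^ q * A)ᴴ)
      rw [conjTranspose_conjTranspose, Matrix.l2_opNorm_conjTranspose] at h
      rw [← h, conjTranspose_mul, conjTranspose_mul, hPc, hct, conjTranspose_pow, hct, hSdef]
      have hst : (A * Aᵀ)ᵀ = A * Aᵀ := by rw [transpose_mul, transpose_transpose]
      rw [hst]
      congr 1
      calc P * (A * Aᵀ) ^ q * A * (Aᵀ * ((A * Aᵀ) ^ q * P))
          = P * ((A * Aᵀ) ^ q * (A * Aᵀ) * (A * Aᵀ) ^ q) * P := by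
            simp only [Matrix.mul_assoc]
        _ = P * (A * Aᵀ) ^ (2 * q + 1) * P := by
            rw [← pow_succ, ← pow_add]
            congr 2
            ring
    have e2 : d (2 * q + 1) * d (2 * q + 1) = ‖P * S ^ (2 * q + 1) * P‖ := by
      rw [hsq]
      rw [hR2]
    have h3 : ‖P * S ^ q * A‖ * ‖P * S ^ q * A‖ = d (2 * q + 1) * d (2 * q + 1) := by
      rw [e1, e2]
    nlinarith [norm_nonneg (P * S ^ q * A), hdnn (2 * q + 1)]
  rw [hPA, hPSA]
  have main : d 1 ^ (2 * q + 1) ≤ d (2 * q + 1) :=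
    seq_pow_le d hdnn hd0 key (2 * q)
  clear hsq key hd0 hPA hPSA hd
  clear_value d
  have hk : (0 : ℝ) < 2 * (q : ℝ) + 1 := by positivity
  have hcast : ((2 * q + 1 : ℕ) : ℝ) = 2 * (q : ℝ) + 1 := by push_cast; ring
  calc d 1 = (d 1 ^ (2 * q + 1 : ℕ)) ^ ((1 : ℝ) / (2 * q + 1)) := by
        rw [← Real.rpow_natCast (d 1) (2 * q + 1), ← Real.rpow_mul (hdnn 1), hcast,
          mul_one_div, div_self (ne_of_gt hk), Real.rpow_one]
    _ ≤ d (2 * q + 1) ^ ((1 : ℝ) / (2 * q + 1)) :=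
        Real.rpow_le_rpow (pow_nonneg (hdnn 1) _) main (le_of_lt (by positivity))
end

section
/- For any matrix H, the orthogonal projector onto the range of the block matrix N = [I; H] (stacked vertically) satisfies I - P_N ⪯ [[HᵀH, -(I+HᵀH)⁻¹Hᵀ], [-H(I+HᵀH)⁻¹, I]] in the Loewner order. -/
open Matrix MeasureTheory ProbabilityTheory

/-- A block-diagonal matrix with positive semidefinite blocks is positive semidefinite. -/
lemma posSemidef_fromBlocks_diag {m n : Type*} [Fintype m] [Fintype n]
    {A : Matrix m m ℝ} {D : Matrix n n ℝ} (hA : A.PosSemidef) (hD : D.PosSemidef) :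
    (Matrix.fromBlocks A 0 0 D).PosSemidef := by
  rw [Matrix.posSemidef_iff_dotProduct_mulVec] at hA hD ⊢
  constructor
  · exact Matrix.IsHermitian.fromBlocks hA.1 (by simp) hD.1
  · intro x
    have h1 := hA.2 (x ∘ Sum.inl)
    have h2 := hD.2 (x ∘ Sum.inr)
    simpa [Matrix.dotProduct_block, Matrix.fromBlocks_mulVec, Function.comp] using
      add_nonneg h1 h2

lemma fromBlocksSub {l m n o : Type*} (A : Matrix n l ℝ) (B : Matrix n m ℝ)
    (C : Matrix o l ℝ) (D : Matrix o m ℝ) (A' : Matrix n l ℝ) (B' : Matrix n m ℝ)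
    (C' : Matrix o l ℝ) (D' : Matrix o m ℝ) :
    Matrix.fromBlocks A B C D - Matrix.fromBlocks A' B' C' D' =
      Matrix.fromBlocks (A - A') (B - B') (C - C') (D - D') := by
  ext (i | i) (j | j) <;> simp

/-- For  stacked vertically,
. -/
theorem one_sub_proj_le_blocks {r s : ℕ} (H : Matrix (Fin s) (Fin r) ℝ) :
    (Matrix.fromBlocks (Hᵀ * H) (-((1 + Hᵀ * H)⁻¹ * Hᵀ)) (-(H * (1 + Hᵀ * H)⁻¹)) 1 -
        (1 - Matrix.fromRows (1 : Matrix (Fin r) (Fin r) ℝ) H *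
          ((Matrix.fromRows (1 : Matrix (Fin r) (Fin r) ℝ) H)ᵀ *
            Matrix.fromRows (1 : Matrix (Fin r) (Fin r) ℝ) H)⁻¹ *
          (Matrix.fromRows (1 : Matrix (Fin r) (Fin r) ℝ) H)ᵀ)).PosSemidef := by
  set G : Matrix (Fin r) (Fin r) ℝ := 1 + Hᵀ * H with hG
  have hGpd : G.PosDef := by
    have := (Matrix.posSemidef_conjTranspose_mul_self H)
    simpa [hG] using Matrix.PosDef.one.add_posSemidef (by simpa using this)
  have hGinv : G⁻¹.PosDef := hGpd.inv
  have hGG : G * G⁻¹ = 1 := Matrix.mul_nonsing_inv _ (isUnit_iff_ne_zero.mpr hGpd.det_pos.ne')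
  have hGG' : G⁻¹ * G = 1 := Matrix.nonsing_inv_mul _ (isUnit_iff_ne_zero.mpr hGpd.det_pos.ne')
  -- NᵀN = G
  have hNtN : (Matrix.fromRows (1 : Matrix (Fin r) (Fin r) ℝ) H)ᵀ *
      Matrix.fromRows (1 : Matrix (Fin r) (Fin r) ℝ) H = G := by
    rw [Matrix.transpose_fromRows, Matrix.fromCols_mul_fromRows]
    simp [hG]
  -- the projector as a block matrix
  have hproj : Matrix.fromRows (1 : Matrix (Fin r) (Fin r) ℝ) H *
      ((Matrix.fromRows (1 : Matrix (Fin r) (Fin r) ℝ) H)ᵀ *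
        Matrix.fromRows (1 : Matrix (Fin r) (Fin r) ℝ) H)⁻¹ *
      (Matrix.fromRows (1 : Matrix (Fin r) (Fin r) ℝ) H)ᵀ =
      Matrix.fromBlocks G⁻¹ (G⁻¹ * Hᵀ) (H * G⁻¹) (H * G⁻¹ * Hᵀ) := by
    rw [hNtN, Matrix.transpose_fromRows, Matrix.fromRows_mul,
      Matrix.fromRows_mul_fromCols]
    simp [Matrix.mul_assoc]
  have hTL : Hᵀ * H - (1 - G⁻¹) = (Hᵀ * H) * G⁻¹ * (Hᵀ * H) := by
    have hHH : Hᵀ * H = G - 1 := by rw [hG]; abel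
    rw [hHH]
    simp only [Matrix.sub_mul, Matrix.mul_sub, Matrix.one_mul, Matrix.mul_one, hGG, hGG']
    try abel
  have hkey : Matrix.fromBlocks (Hᵀ * H) (-(G⁻¹ * Hᵀ)) (-(H * G⁻¹)) 1 -
      (1 - Matrix.fromBlocks G⁻¹ (G⁻¹ * Hᵀ) (H * G⁻¹) (H * G⁻¹ * Hᵀ)) =
      Matrix.fromBlocks ((Hᵀ * H) * G⁻¹ * (Hᵀ * H)) 0 0 (H * G⁻¹ * Hᵀ) := by
    rw [← Matrix.fromBlocks_one, fromBlocksSub, fromBlocksSub]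
    rw [hTL]
    ext (i | i) (j | j) <;> simp
  rw [hproj, hkey]
  apply posSemidef_fromBlocks_diag
  · have := hGinv.posSemidef.conjTranspose_mul_mul_same (Hᵀ * H)
    simpa [Matrix.transpose_mul, Matrix.mul_assoc] using this
  · have := hGinv.posSemidef.conjTranspose_mul_mul_same Hᵀ
    simpa [Matrix.mul_assoc] using this
end

section
/- Deterministic error bound: Let X be an m×n real matrix (m ≥ n) with SVD X = U₁Λ₁V₁ᵀ + U₂Λ₂V₂ᵀ where Λ₁ contains the largest r singular values. Let A₁ be an n×(r+p) matrix such that V₁ᵀA₁ has full row rank, and set L = Y₁(A₂ᵀY₁)⁻¹Y₂ᵀ where A₂ = XA₁, Y₂ = XᵀA₂, and Y₁ = XY₂ (assuming A₂ᵀY₁ is invertible). Then ‖X - L‖² ≤ ‖Λ₂²(V₂ᵀA₁)(V₁ᵀA₁)†Λ₁⁻¹‖² + ‖Λ₂‖². -/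
open Matrix MeasureTheory ProbabilityTheory

open scoped Matrix.Norms.L2Operator
attribute [local instance 2000] Matrix.instL2OpNormedAddCommGroup

section AuxNorm

variable {m n : Type*} [Fintype m] [Fintype n] [DecidableEq m] [DecidableEq n]

set_option linter.unusedSectionVars false

lemma aux_specNorm_eq (A : Matrix m n ℝ) : specNorm A = ‖A‖ := rfl

lemma aux_conjT (A : Matrix m n ℝ) : Aᴴ = Aᵀ :=
  Matrix.conjTranspose_eq_transpose_of_trivial A

lemma aux_sq (A : Matrix m n ℝ) : ‖Aᵀ * A‖ = ‖A‖ * ‖A‖ := by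
  rw [← aux_conjT]; exact Matrix.l2_opNorm_conjTranspose_mul_self A

lemma aux_norm_transpose (A : Matrix m n ℝ) : ‖Aᵀ‖ = ‖A‖ := by
  rw [← aux_conjT]; exact Matrix.l2_opNorm_conjTranspose A

/-- An isometric embedding has operator norm at most 1. -/
lemma aux_norm_le_one_of_iso (A : Matrix m n ℝ) (h : Aᵀ * A = 1) : ‖A‖ ≤ 1 := by
  have e1 : ‖(1 : Matrix n n ℝ)‖ = ‖A‖ * ‖A‖ := by rw [← h]; exact aux_sq A
  have e2 : ‖(1 : Matrix n n ℝ)‖ = ‖(1 : Matrix n n ℝ)‖ * ‖(1 : Matrix n n ℝ)‖ := by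
    have := aux_sq (1 : Matrix n n ℝ)
    rwa [Matrix.transpose_one, Matrix.mul_one] at this
  have h4 : ‖A‖ * ‖A‖ = (‖A‖ * ‖A‖) * (‖A‖ * ‖A‖) := by rw [← e1, ← e2]
  nlinarith [h4, norm_nonneg A, sq_nonneg (‖A‖ * ‖A‖ - 1), sq_nonneg (‖A‖ - 1)]

/-- A symmetric idempotent has operator norm at most 1. -/
lemma aux_norm_proj_le_one (Q : Matrix n n ℝ) (h1 : Qᵀ = Q) (h2 : Q * Q = Q) :
    ‖Q‖ ≤ 1 := by
  have e : ‖Q‖ = ‖Q‖ * ‖Q‖ := by rw [← aux_sq Q, h1, h2]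
  nlinarith [norm_nonneg Q, sq_nonneg (‖Q‖ - 1)]

/-- Pythagoras-type bound for a sum with mutually orthogonal isometric left factors. -/
lemma aux_pyth {r s : Type*} [Fintype r] [Fintype s] [DecidableEq r] [DecidableEq s]
    (U₁ : Matrix m r ℝ) (U₂ : Matrix m s ℝ) (M₁ : Matrix r n ℝ) (M₂ : Matrix s n ℝ)
    (h1 : U₁ᵀ * U₁ = 1) (h2 : U₂ᵀ * U₂ = 1) (h12 : U₁ᵀ * U₂ = 0) :
    ‖U₁ * M₁ + U₂ * M₂‖ ^ 2 ≤ ‖M₁‖ ^ 2 + ‖M₂‖ ^ 2 := by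
  have h21 : U₂ᵀ * U₁ = 0 := by
    have := congrArg Matrix.transpose h12
    simpa [Matrix.transpose_mul] using this
  have r1 : U₁ᵀ * (U₁ * M₁) = M₁ := by rw [← Matrix.mul_assoc, h1, Matrix.one_mul]
  have r2 : U₂ᵀ * (U₂ * M₂) = M₂ := by rw [← Matrix.mul_assoc, h2, Matrix.one_mul]
  have r12 : U₁ᵀ * (U₂ * M₂) = 0 := by rw [← Matrix.mul_assoc, h12, Matrix.zero_mul]
  have r21 : U₂ᵀ * (U₁ * M₁) = 0 := by rw [← Matrix.mul_assoc, h21, Matrix.zero_mul]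
  have hTT : (U₁ * M₁ + U₂ * M₂)ᵀ * (U₁ * M₁ + U₂ * M₂) = M₁ᵀ * M₁ + M₂ᵀ * M₂ := by
    simp [Matrix.transpose_add, Matrix.transpose_mul, Matrix.add_mul, Matrix.mul_add,
      Matrix.mul_assoc, r1, r2, r12, r21, Matrix.mul_zero, Matrix.zero_mul]
  have e := aux_sq (U₁ * M₁ + U₂ * M₂)
  rw [hTT] at e
  calc ‖U₁ * M₁ + U₂ * M₂‖ ^ 2 = ‖M₁ᵀ * M₁ + M₂ᵀ * M₂‖ := by rw [sq, ← e]
    _ ≤ ‖M₁ᵀ * M₁‖ + ‖M₂ᵀ * M₂‖ := norm_add_le _ _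
    _ = ‖M₁‖ ^ 2 + ‖M₂‖ ^ 2 := by rw [aux_sq, aux_sq, sq, sq]

end AuxNorm

set_option maxHeartbeats 1000000 in
/-- Deterministic error bound for the BRP low-rank approximation:
`‖X - L‖² ≤ ‖Λ₂² (V₂ᵀA₁)(V₁ᵀA₁)† Λ₁⁻¹‖² + ‖Λ₂‖²`. -/
theorem brp_deterministic_error_bound {m n r p : ℕ} (hmn : n ≤ m) (hrn : r + 1 ≤ n)
    (hp : 2 ≤ p)
    (U₁ : Matrix (Fin m) (Fin r) ℝ) (U₂ : Matrix (Fin m) (Fin (n - r)) ℝ)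
    (V₁ : Matrix (Fin n) (Fin r) ℝ) (V₂ : Matrix (Fin n) (Fin (n - r)) ℝ)
    (Λ₁ : Fin r → ℝ) (Λ₂ : Fin (n - r) → ℝ)
    (hU₁ : U₁ᵀ * U₁ = 1) (hU₂ : U₂ᵀ * U₂ = 1) (hU₁₂ : U₁ᵀ * U₂ = 0)
    (hV₁ : V₁ᵀ * V₁ = 1) (hV₂ : V₂ᵀ * V₂ = 1) (hV₁₂ : V₁ᵀ * V₂ = 0)
    (hVfull : V₁ * V₁ᵀ + V₂ * V₂ᵀ = 1)
    (hΛ₁pos : ∀ i, 0 < Λ₁ i) (hΛ₂ : ∀ i, 0 ≤ Λ₂ i)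
    (hdecay : ∀ i j, Λ₂ j ≤ Λ₁ i)
    (X : Matrix (Fin m) (Fin n) ℝ)
    (hX : X = U₁ * Matrix.diagonal Λ₁ * V₁ᵀ + U₂ * Matrix.diagonal Λ₂ * V₂ᵀ)
    (A₁ : Matrix (Fin n) (Fin (r + p)) ℝ)
    (hfr : IsUnit ((V₁ᵀ * A₁) * (V₁ᵀ * A₁)ᵀ))
    (A₂ : Matrix (Fin m) (Fin (r + p)) ℝ) (hA₂ : A₂ = X * A₁)
    (Y₂ : Matrix (Fin n) (Fin (r + p)) ℝ) (hY₂ : Y₂ = Xᵀ * A₂)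
    (Y₁ : Matrix (Fin m) (Fin (r + p)) ℝ) (hY₁ : Y₁ = X * Y₂)
    (hinv : IsUnit (A₂ᵀ * Y₁))
    (L : Matrix (Fin m) (Fin n) ℝ) (hL : L = Y₁ * (A₂ᵀ * Y₁)⁻¹ * Y₂ᵀ) :
    specNorm (X - L) ^ 2 ≤
      specNorm (Matrix.diagonal Λ₂ * Matrix.diagonal Λ₂ * (V₂ᵀ * A₁) *
          pinvFR (V₁ᵀ * A₁) * (Matrix.diagonal Λ₁)⁻¹) ^ 2 +
        specNorm (Matrix.diagonal Λ₂) ^ 2 := by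
  simp only [aux_specNorm_eq]
  set D₁ := Matrix.diagonal Λ₁ with hD₁def
  set D₂ := Matrix.diagonal Λ₂ with hD₂def
  set Ω₁ := V₁ᵀ * A₁ with hΩ₁def
  set Ω₂ := V₂ᵀ * A₁ with hΩ₂def
  set G := D₂ * D₂ * Ω₂ * pinvFR Ω₁ * D₁⁻¹ with hGdef
  -- symmetric diagonal blocks
  have hD₁symm : D₁ᵀ = D₁ := by rw [hD₁def]; exact Matrix.diagonal_transpose _
  have hD₂symm : D₂ᵀ = D₂ := by rw [hD₂def]; exact Matrix.diagonal_transpose _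
  -- reassociated orthogonality lemmas
  have hU21 : U₂ᵀ * U₁ = 0 := by
    have := congrArg Matrix.transpose hU₁₂
    simpa [Matrix.transpose_mul] using this
  have rU1 : ∀ {k : Type} (C : Matrix (Fin r) k ℝ), U₁ᵀ * (U₁ * C) = C := fun C => by
    rw [← Matrix.mul_assoc, hU₁, Matrix.one_mul]
  have rU2 : ∀ {k : Type} (C : Matrix (Fin (n - r)) k ℝ), U₂ᵀ * (U₂ * C) = C := fun C => by
    rw [← Matrix.mul_assoc, hU₂, Matrix.one_mul]
  have rU12 : ∀ {k : Type} (C : Matrix (Fin (n - r)) k ℝ), U₁ᵀ * (U₂ * C) = 0 := fun C => by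
    rw [← Matrix.mul_assoc, hU₁₂, Matrix.zero_mul]
  have rU21 : ∀ {k : Type} (C : Matrix (Fin r) k ℝ), U₂ᵀ * (U₁ * C) = 0 := fun C => by
    rw [← Matrix.mul_assoc, hU21, Matrix.zero_mul]
  -- inverse facts
  have hD1det : IsUnit D₁.det := by
    rw [hD₁def, Matrix.det_diagonal]
    exact isUnit_iff_ne_zero.mpr (Finset.prod_pos (fun i _ => hΛ₁pos i)).ne'
  have hD1inv : D₁ * D₁⁻¹ = 1 := Matrix.mul_nonsing_inv _ hD1det
  have hpinv : Ω₁ * pinvFR Ω₁ = 1 := by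
    rw [pinvFR, ← Matrix.mul_assoc]
    exact Matrix.mul_nonsing_inv _ ((Matrix.isUnit_iff_isUnit_det _).mp hfr)
  have rΩpinv : ∀ {k : Type} (C : Matrix (Fin r) k ℝ), Ω₁ * (pinvFR Ω₁ * C) = C := fun C => by
    rw [← Matrix.mul_assoc, hpinv, Matrix.one_mul]
  -- the sample matrix B and projection P
  set B := V₁ * (D₁ * (D₁ * Ω₁)) + V₂ * (D₂ * (D₂ * Ω₂)) with hBdef
  have hY₂' : Y₂ = B := by
    rw [hY₂, hA₂, hX]
    simp [hBdef, hΩ₁def, hΩ₂def, Matrix.transpose_add, Matrix.transpose_mul,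
      Matrix.transpose_transpose, hD₁symm, hD₂symm, Matrix.add_mul, Matrix.mul_add,
      Matrix.mul_assoc, rU1, rU2, rU12, rU21, Matrix.mul_zero, Matrix.zero_mul]
  have hY₁' : Y₁ = X * B := by rw [hY₁, hY₂']
  have hA2Y1 : A₂ᵀ * Y₁ = Bᵀ * B := by
    rw [hA₂, hY₁', Matrix.transpose_mul]
    have e : A₁ᵀ * Xᵀ * (X * B) = (Xᵀ * (X * A₁))ᵀ * B := by
      simp [Matrix.transpose_mul, Matrix.transpose_transpose, Matrix.mul_assoc]
    rw [e, ← hA₂, ← hY₂, hY₂']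
  have hBdet : IsUnit (Bᵀ * B).det := by
    rw [← hA2Y1]; exact (Matrix.isUnit_iff_isUnit_det _).mp hinv
  have hBi1 : (Bᵀ * B) * (Bᵀ * B)⁻¹ = 1 := Matrix.mul_nonsing_inv _ hBdet
  have hBi2 : (Bᵀ * B)⁻¹ * (Bᵀ * B) = 1 := Matrix.nonsing_inv_mul _ hBdet
  set P := B * ((Bᵀ * B)⁻¹ * Bᵀ) with hPdef
  have hPB : P * B = B := by
    calc P * B = B * ((Bᵀ * B)⁻¹ * (Bᵀ * B)) := by rw [hPdef]; simp [Matrix.mul_assoc]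
      _ = B := by rw [hBi2, Matrix.mul_one]
  have hPsym : Pᵀ = P := by
    rw [hPdef]
    simp [Matrix.transpose_mul, Matrix.transpose_transpose, Matrix.transpose_nonsing_inv,
      Matrix.mul_assoc]
  have hPP : P * P = P := by
    calc P * P = B * ((Bᵀ * B)⁻¹ * ((Bᵀ * B) * ((Bᵀ * B)⁻¹ * Bᵀ))) := by
          rw [hPdef]; simp [Matrix.mul_assoc]
      _ = P := by rw [← Matrix.mul_assoc (Bᵀ * B), hBi1, Matrix.one_mul, hPdef]
  have hQsym : (1 - P)ᵀ = 1 - P := by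
    rw [Matrix.transpose_sub, Matrix.transpose_one, hPsym]
  have hQQ : (1 - P) * (1 - P) = 1 - P := by
    have e : (1 - P) * (1 - P) = 1 - P - P + P * P := by noncomm_ring
    rw [e, hPP]; abel
  have hQle : ‖(1 - P)‖ ≤ 1 := aux_norm_proj_le_one _ hQsym hQQ
  have hV₂le : ‖V₂‖ ≤ 1 := aux_norm_le_one_of_iso _ hV₂
  -- X - L = X (1 - P)
  have hL' : L = X * P := by
    rw [hL, hA2Y1, hY₁', hY₂', hPdef, Matrix.mul_assoc, Matrix.mul_assoc]
  have hXL : X - L = X * (1 - P) := by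
    rw [hL', Matrix.mul_sub, Matrix.mul_one]
  -- the key identity
  have hQB : (1 - P) * B = 0 := by
    rw [Matrix.sub_mul, Matrix.one_mul, hPB, sub_self]
  have hBW : B * (pinvFR Ω₁ * D₁⁻¹) = V₁ * D₁ + V₂ * G := by
    rw [hBdef, hGdef]
    simp [Matrix.add_mul, Matrix.mul_assoc, rΩpinv, hD1inv, Matrix.mul_one]
  have hkey : (1 - P) * (V₁ * D₁) = -((1 - P) * (V₂ * G)) := by
    have h0 : (1 - P) * (B * (pinvFR Ω₁ * D₁⁻¹)) = 0 := by
      rw [← Matrix.mul_assoc, hQB, Matrix.zero_mul]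
    rw [hBW, Matrix.mul_add] at h0
    exact eq_neg_of_add_eq_zero_left h0
  -- norm bounds on the two blocks
  have h1 : ‖D₁ * (V₁ᵀ * (1 - P))‖ ≤ ‖G‖ := by
    have e1 : ‖D₁ * (V₁ᵀ * (1 - P))‖ = ‖(1 - P) * (V₂ * G)‖ := by
      rw [← aux_norm_transpose (D₁ * (V₁ᵀ * (1 - P)))]
      have e2 : (D₁ * (V₁ᵀ * (1 - P)))ᵀ = (1 - P) * (V₁ * D₁) := by
        simp [Matrix.transpose_mul, Matrix.transpose_transpose, hD₁symm, hQsym,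
          Matrix.mul_assoc]
      rw [e2, hkey, norm_neg]
    rw [e1]
    have b1 := Matrix.l2_opNorm_mul (1 - P) (V₂ * G)
    have b2 := Matrix.l2_opNorm_mul V₂ G
    nlinarith [norm_nonneg (V₂ * G), norm_nonneg G, norm_nonneg (1 - P), norm_nonneg V₂]
  have h2 : ‖D₂ * (V₂ᵀ * (1 - P))‖ ≤ ‖D₂‖ := by
    have b1 := Matrix.l2_opNorm_mul D₂ (V₂ᵀ * (1 - P))
    have b2 := Matrix.l2_opNorm_mul V₂ᵀ (1 - P)
    have hV₂t : ‖V₂ᵀ‖ ≤ 1 := by rw [aux_norm_transpose]; exact hV₂le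
    calc ‖D₂ * (V₂ᵀ * (1 - P))‖ ≤ ‖D₂‖ * ‖V₂ᵀ * (1 - P)‖ := b1
      _ ≤ ‖D₂‖ * (‖V₂ᵀ‖ * ‖(1 - P)‖) := mul_le_mul_of_nonneg_left b2 (norm_nonneg _)
      _ ≤ ‖D₂‖ * 1 :=
          mul_le_mul_of_nonneg_left (mul_le_one₀ hV₂t (norm_nonneg _) hQle) (norm_nonneg _)
      _ = ‖D₂‖ := mul_one _
  -- put it together
  have hsplit : X - L = U₁ * (D₁ * (V₁ᵀ * (1 - P))) + U₂ * (D₂ * (V₂ᵀ * (1 - P))) := by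
    rw [hXL, hX]
    simp [Matrix.add_mul, Matrix.mul_assoc]
  rw [hsplit]
  refine le_trans (aux_pyth U₁ U₂ _ _ hU₁ hU₂ hU₁₂) ?_
  have g1 : ‖D₁ * (V₁ᵀ * (1 - P))‖ ^ 2 ≤ ‖G‖ ^ 2 :=
    pow_le_pow_left₀ (norm_nonneg _) h1 2
  have g2 : ‖D₂ * (V₂ᵀ * (1 - P))‖ ^ 2 ≤ ‖D₂‖ ^ 2 :=
    pow_le_pow_left₀ (norm_nonneg _) h2 2
  exact add_le_add g1 g2
end

section
/- Exact recovery via BRP: if X is an m×n real matrix of rank exactly r, A₁ ∈ ℝ^{n×r}, Y₁ = XA₁, A₂ = Y₁, Y₂ = XᵀA₂, and A₂ᵀY₁ is invertible, then L = Y₁(A₂ᵀY₁)⁻¹Y₂ᵀ = X. -/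
open Matrix MeasureTheory ProbabilityTheory

/-- Exact recovery of a rank- matrix from bilateral random projections. -/
theorem brp_exact_recovery {m n r : ℕ} (X : Matrix (Fin m) (Fin n) ℝ)
    (hrank : X.rank = r) (A₁ : Matrix (Fin n) (Fin r) ℝ)
    (Y₁ : Matrix (Fin m) (Fin r) ℝ) (hY₁ : Y₁ = X * A₁)
    (A₂ : Matrix (Fin m) (Fin r) ℝ) (hA₂ : A₂ = Y₁)
    (Y₂ : Matrix (Fin n) (Fin r) ℝ) (hY₂ : Y₂ = Xᵀ * A₂)
    (hinv : IsUnit (A₂ᵀ * Y₁)) :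
    Y₁ * (A₂ᵀ * Y₁)⁻¹ * Y₂ᵀ = X := by
  subst hA₂ hY₂
  have hrY : A₂.rank = r := by
    have h1 : (A₂ᵀ * A₂).rank = A₂.rank := Matrix.rank_transpose_mul_self A₂
    rw [← h1, Matrix.rank_of_isUnit _ hinv, Fintype.card_fin]
  have hle : LinearMap.range A₂.mulVecLin ≤ LinearMap.range X.mulVecLin := by
    rw [hY₁, Matrix.mulVecLin_mul]
    exact LinearMap.range_comp_le_range _ _
  have heq : LinearMap.range A₂.mulVecLin = LinearMap.range X.mulVecLin := by
    apply Submodule.eq_of_le_of_finrank_eq hle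
    show Matrix.rank A₂ = Matrix.rank X
    rw [hrY, hrank]
  have hcol : ∀ j, ∃ c : Fin r → ℝ, A₂ *ᵥ c = fun i => X i j := by
    intro j
    have : (fun i => X i j) ∈ LinearMap.range X.mulVecLin := by
      refine ⟨Pi.single j 1, ?_⟩
      ext i
      simp [Matrix.mulVecLin, Matrix.mulVec, dotProduct, Pi.single_apply, Finset.sum_ite_eq]
    rw [← heq] at this
    exact this
  choose c hc using hcol
  set C : Matrix (Fin r) (Fin n) ℝ := Matrix.of fun i j => c j i with hC
  have hXC : X = A₂ * C := by
    ext i j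
    have := congrFun (hc j) i
    simpa [Matrix.mul_apply, Matrix.mulVec, dotProduct, hC] using this.symm
  have hdet : IsUnit (A₂ᵀ * A₂).det := (Matrix.isUnit_iff_isUnit_det _).mp hinv
  calc A₂ * (A₂ᵀ * A₂)⁻¹ * (Xᵀ * A₂)ᵀ
      = A₂ * (A₂ᵀ * A₂)⁻¹ * (A₂ᵀ * X) := by rw [Matrix.transpose_mul, Matrix.transpose_transpose]
    _ = A₂ * ((A₂ᵀ * A₂)⁻¹ * (A₂ᵀ * A₂)) * C := by rw [hXC]; simp only [Matrix.mul_assoc]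
    _ = A₂ * C := by rw [Matrix.nonsing_inv_mul _ hdet, Matrix.mul_one]
    _ = X := hXC.symm
end

section
/- The BRP approximation error equals a projection residual: with A₂ = XA₁ and the updated A₁' = XᵀA₂ = XᵀXA₁, and L = Y₁(A₂ᵀY₁)⁻¹Y₂ᵀ where Y₁ = XA₁', Y₂ = XᵀA₂, one has ‖X − L‖ = ‖Λ(I − P_M)‖ where M = Λ²VᵀA₁, P_M is the orthogonal projector onto range(M), and X = UΛVᵀ is an SVD with U, V orthogonal. -/
open Matrix MeasureTheory ProbabilityTheory

lemma toEucl_mul {m n k : Type*} [Fintype m] [Fintype n] [Fintype k] [DecidableEq n]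
    [DecidableEq k] (A : Matrix m n ℝ) (B : Matrix n k ℝ) :
    Matrix.toEuclideanLin (A * B) = (Matrix.toEuclideanLin A).comp (Matrix.toEuclideanLin B) := by
  ext x
  simp [Matrix.toEuclideanLin_apply, Matrix.mulVec_mulVec]

lemma isom_of_orth {m n : Type*} [Fintype m] [Fintype n] [DecidableEq m] [DecidableEq n]
    (W : Matrix m n ℝ) (hW : Wᵀ * W = 1) (x : EuclideanSpace ℝ n) :
    ‖Matrix.toEuclideanLin W x‖ = ‖x‖ := by
  have h : Wᵀ = Wᴴ := (Matrix.conjTranspose_eq_transpose_of_trivial W).symm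
  have h2 : Matrix.toEuclideanLin Wᴴ = LinearMap.adjoint (Matrix.toEuclideanLin W) :=
    Matrix.toEuclideanLin_conjTranspose_eq_adjoint W
  have key : (inner ℝ (Matrix.toEuclideanLin W x) (Matrix.toEuclideanLin W x) : ℝ) = inner ℝ x x := by
    rw [← LinearMap.adjoint_inner_left, ← h2, ← h, ← LinearMap.comp_apply, ← toEucl_mul, hW]
    simp [Matrix.toEuclideanLin_apply]
  have h3 := real_inner_self_eq_norm_sq (Matrix.toEuclideanLin W x)
  have h4 := real_inner_self_eq_norm_sq x
  nlinarith [norm_nonneg (Matrix.toEuclideanLin W x), norm_nonneg x]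

lemma specNorm_mul_left {m n k : Type*} [Fintype m] [Fintype n] [Fintype k] [DecidableEq m]
    [DecidableEq n] [DecidableEq k] (U : Matrix m n ℝ) (B : Matrix n k ℝ) (hU : Uᵀ * U = 1) :
    specNorm (U * B) = specNorm B := by
  unfold specNorm
  apply le_antisymm
  · apply ContinuousLinearMap.opNorm_le_bound _ (norm_nonneg _)
    intro x
    have : ‖(Matrix.toEuclideanLin (U * B)).toContinuousLinearMap x‖
        = ‖(Matrix.toEuclideanLin B) x‖ := by
      simp only [LinearMap.coe_toContinuousLinearMap', toEucl_mul, LinearMap.comp_apply]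
      exact isom_of_orth U hU _
    rw [this]
    exact (Matrix.toEuclideanLin B).toContinuousLinearMap.le_opNorm x
  · apply ContinuousLinearMap.opNorm_le_bound _ (norm_nonneg _)
    intro x
    have : ‖(Matrix.toEuclideanLin B).toContinuousLinearMap x‖
        = ‖(Matrix.toEuclideanLin (U * B)).toContinuousLinearMap x‖ := by
      simp only [LinearMap.coe_toContinuousLinearMap', toEucl_mul, LinearMap.comp_apply]
      exact (isom_of_orth U hU _).symm
    rw [this]
    exact (Matrix.toEuclideanLin (U * B)).toContinuousLinearMap.le_opNorm x

lemma specNorm_mul_right_le {m n k : Type*} [Fintype m] [Fintype n] [Fintype k]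
    [DecidableEq n] [DecidableEq k] (B : Matrix m n ℝ) (W : Matrix n k ℝ) (hW : Wᵀ * W = 1) :
    specNorm (B * W) ≤ specNorm B := by
  unfold specNorm
  apply ContinuousLinearMap.opNorm_le_bound _ (norm_nonneg _)
  intro x
  have h1 : ‖(Matrix.toEuclideanLin (B * W)).toContinuousLinearMap x‖
      = ‖(Matrix.toEuclideanLin B) (Matrix.toEuclideanLin W x)‖ := by
    simp only [LinearMap.coe_toContinuousLinearMap', toEucl_mul, LinearMap.comp_apply]
  rw [h1]
  calc ‖(Matrix.toEuclideanLin B) (Matrix.toEuclideanLin W x)‖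
      ≤ ‖(Matrix.toEuclideanLin B).toContinuousLinearMap‖ * ‖Matrix.toEuclideanLin W x‖ :=
        (Matrix.toEuclideanLin B).toContinuousLinearMap.le_opNorm _
    _ = ‖(Matrix.toEuclideanLin B).toContinuousLinearMap‖ * ‖x‖ := by
        rw [isom_of_orth W hW]

lemma specNorm_mul_right_orth {m n : Type*} [Fintype m] [Fintype n]
    [DecidableEq n] (B : Matrix m n ℝ) (W : Matrix n n ℝ)
    (h1 : Wᵀ * W = 1) (h2 : W * Wᵀ = 1) :
    specNorm (B * Wᵀ) = specNorm B := by
  apply le_antisymm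
  · exact specNorm_mul_right_le B Wᵀ (by rw [Matrix.transpose_transpose, h2])
  · have : B = B * Wᵀ * W := by rw [Matrix.mul_assoc, h1, Matrix.mul_one]
    nth_rewrite 1 [this]
    exact specNorm_mul_right_le (B * Wᵀ) W h1

/-- The BRP approximation error equals the projection residual  with
. -/
theorem brp_error_eq_proj_residual {m n r p : ℕ} (hmn : n ≤ m)
    (U : Matrix (Fin m) (Fin n) ℝ) (V : Matrix (Fin n) (Fin n) ℝ) (Λ : Fin n → ℝ)
    (hΛ : ∀ i, 0 ≤ Λ i) (hU : Uᵀ * U = 1) (hV : Vᵀ * V = 1) (hV' : V * Vᵀ = 1)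
    (X : Matrix (Fin m) (Fin n) ℝ) (hX : X = U * Matrix.diagonal Λ * Vᵀ)
    (A₁ : Matrix (Fin n) (Fin (r + p)) ℝ)
    (A₂ : Matrix (Fin m) (Fin (r + p)) ℝ) (hA₂ : A₂ = X * A₁)
    (A₁' : Matrix (Fin n) (Fin (r + p)) ℝ) (hA₁' : A₁' = Xᵀ * A₂)
    (Y₁ : Matrix (Fin m) (Fin (r + p)) ℝ) (hY₁ : Y₁ = X * A₁')
    (Y₂ : Matrix (Fin n) (Fin (r + p)) ℝ) (hY₂ : Y₂ = Xᵀ * A₂)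
    (hinv : IsUnit (A₂ᵀ * Y₁))
    (M : Matrix (Fin n) (Fin (r + p)) ℝ)
    (hM : M = Matrix.diagonal Λ * Matrix.diagonal Λ * Vᵀ * A₁) :
    specNorm (X - Y₁ * (A₂ᵀ * Y₁)⁻¹ * Y₂ᵀ) =
      specNorm (Matrix.diagonal Λ * (1 - M * (Mᵀ * M)⁻¹ * Mᵀ)) := by
  set D := Matrix.diagonal Λ with hD
  have hDT : Dᵀ = D := by rw [hD, Matrix.diagonal_transpose]
  have hUU : ∀ (k : Type) [Fintype k] (C : Matrix (Fin n) k ℝ), Uᵀ * (U * C) = C := by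
    intro k _ C; rw [← Matrix.mul_assoc, hU, Matrix.one_mul]
  have hVV : ∀ (k : Type) [Fintype k] (C : Matrix (Fin n) k ℝ), Vᵀ * (V * C) = C := by
    intro k _ C; rw [← Matrix.mul_assoc, hV, Matrix.one_mul]
  have hVV' : ∀ (k : Type) [Fintype k] (C : Matrix (Fin n) k ℝ), V * (Vᵀ * C) = C := by
    intro k _ C; rw [← Matrix.mul_assoc, hV', Matrix.one_mul]
  have hA2Y1 : A₂ᵀ * Y₁ = Mᵀ * M := by
    subst hY₁ hA₁' hA₂ hX hM
    simp only [Matrix.transpose_mul, Matrix.transpose_transpose, Matrix.diagonal_transpose, hDT,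
      Matrix.mul_assoc, hUU, hVV]
  have hY1M : Y₁ = U * (D * M) := by
    subst hY₁ hA₁' hA₂ hX hM
    simp only [Matrix.transpose_mul, Matrix.transpose_transpose, Matrix.diagonal_transpose, hDT,
      Matrix.mul_assoc, hUU, hVV]
  have hY2M : Y₂ = V * M := by
    subst hY₂ hA₂ hX hM
    simp only [Matrix.transpose_mul, Matrix.transpose_transpose, Matrix.diagonal_transpose, hDT,
      Matrix.mul_assoc, hUU, hVV]
  have key : X - Y₁ * (A₂ᵀ * Y₁)⁻¹ * Y₂ᵀ
      = U * ((D * (1 - M * (Mᵀ * M)⁻¹ * Mᵀ)) * Vᵀ) := by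
    rw [hA2Y1, hY1M, hY2M, hX]
    simp only [Matrix.transpose_mul, Matrix.transpose_transpose, Matrix.mul_sub,
      Matrix.sub_mul, Matrix.mul_one, Matrix.mul_assoc, ← hD]
  rw [key, specNorm_mul_left U _ hU]
  exact specNorm_mul_right_orth _ V hV hV'
end
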